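/- Ergodic averaging of the vertical integral: let q : ℝ → ℝ be measurable with c₁ ≤ q ≤ c₂ for constants 0 < c₁ ≤ c₂, suppose the Cesàro averages (1/T)∫_0^T q²(s) ds converge to a limit ⟨q²⟩ as T → ∞, and let 0 < θ. Then for every h > 0 and every continuous function g : [−h, 0] → ℝ, lim_{ε→0} ∫_{−h}^0 g(x₃) q²(−ε^{−θ} x₃) dx₃ = ⟨q²⟩ ∫_{−h}^0 g(x₃) dx₃. -/

import Mathlib

open Set Filter intervalIntegral

/-- Integrability of the rescaled `q²`. -/
lemma qsq_intable {q : ℝ → ℝ} {c₁ c₂ : ℝ} (hqm : Measurable q) (hc₁ : 0 < c₁)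
    (hbd : ∀ s, c₁ ≤ q s ∧ q s ≤ c₂) (L a b : ℝ) :
    IntervalIntegrable (fun x => q (-L * x) ^ 2) MeasureTheory.volume a b := by
  have hm : Measurable fun x : ℝ => q (-L * x) ^ 2 :=
    (hqm.comp (measurable_const_mul _)).pow_const 2
  rw [intervalIntegrable_iff]
  refine MeasureTheory.Integrable.mono' (g := fun _ => c₂ ^ 2)
    (MeasureTheory.integrableOn_const measure_Ioc_lt_top.ne)
    hm.aestronglyMeasurable ?_
  refine MeasureTheory.ae_of_all _ fun x => ?_
  have h1 := (hbd (-L * x)).1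
  have h2 := (hbd (-L * x)).2
  rw [Real.norm_eq_abs, abs_of_nonneg (sq_nonneg _)]
  show q (-L * x) ^ 2 ≤ c₂ ^ 2
  nlinarith

/-- Basic convergence of the rescaled average on `[-c, 0]`. -/
lemma psi_tendsto {q : ℝ → ℝ} {A : ℝ}
    (hcesaro : Tendsto (fun T : ℝ => (1 / T) * ∫ s in (0 : ℝ)..T, q s ^ 2)
      atTop (nhds A)) {c : ℝ} (hc : 0 ≤ c) :
    Tendsto (fun L : ℝ => ∫ x in (-c)..(0 : ℝ), q (-L * x) ^ 2) atTop
      (nhds (A * c)) := by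
  rcases eq_or_lt_of_le hc with rfl | hc
  · simpa using (tendsto_const_nhds : Tendsto (fun _ : ℝ => (0:ℝ)) atTop (nhds 0))
  · have key : ∀ L : ℝ, 0 < L → (∫ x in (-c)..(0 : ℝ), q (-L * x) ^ 2)
        = c * ((1 / (L * c)) * ∫ s in (0 : ℝ)..(L * c), q s ^ 2) := by
      intro L hL
      have h1 : (∫ x in (-c)..(0 : ℝ), q (-L * x) ^ 2)
          = L⁻¹ • ∫ u in (L * -c)..(L * 0), q (-u) ^ 2 := by
        have := intervalIntegral.integral_comp_mul_left (a := (-c : ℝ)) (b := (0 : ℝ))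
          (fun u : ℝ => q (-u) ^ 2) (ne_of_gt hL)
        simpa [neg_mul] using this
      rw [h1]
      have h2 : (∫ u in (L * -c)..(L * 0), q (-u) ^ 2)
          = ∫ s in (0 : ℝ)..(L * c), q s ^ 2 := by
        rw [mul_zero, mul_neg]
        simpa using intervalIntegral.integral_comp_neg (fun u : ℝ => q u ^ 2)
          (a := -(L * c)) (b := 0)
      rw [h2, smul_eq_mul]
      field_simp
    have h3 : Tendsto (fun L : ℝ =>
        c * ((1 / (L * c)) * ∫ s in (0 : ℝ)..(L * c), q s ^ 2)) atTop
        (nhds (c * A)) :=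
      (hcesaro.comp (tendsto_id.atTop_mul_const hc)).const_mul c
    have h4 : Tendsto (fun L : ℝ => ∫ x in (-c)..(0 : ℝ), q (-L * x) ^ 2) atTop
        (nhds (c * A)) := by
      refine h3.congr' ?_
      filter_upwards [eventually_gt_atTop (0 : ℝ)] with L hL
      exact (key L hL).symm
    simpa [mul_comm] using h4

/-- Convergence on an arbitrary subinterval of `(-∞, 0]`. -/
lemma interval_tendsto {q : ℝ → ℝ} {c₁ c₂ A : ℝ} (hqm : Measurable q) (hc₁ : 0 < c₁)
    (hbd : ∀ s, c₁ ≤ q s ∧ q s ≤ c₂)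
    (hcesaro : Tendsto (fun T : ℝ => (1 / T) * ∫ s in (0 : ℝ)..T, q s ^ 2)
      atTop (nhds A)) {a b : ℝ} (hab : a ≤ b) (hb : b ≤ 0) :
    Tendsto (fun L : ℝ => ∫ x in a..b, q (-L * x) ^ 2) atTop
      (nhds (A * (b - a))) := by
  have ha' : (0 : ℝ) ≤ -a := by linarith
  have hb' : (0 : ℝ) ≤ -b := by linarith
  have key : ∀ L : ℝ, (∫ x in a..b, q (-L * x) ^ 2)
      = (∫ x in (-(-a))..(0:ℝ), q (-L * x) ^ 2)
        - ∫ x in (-(-b))..(0:ℝ), q (-L * x) ^ 2 := by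
    intro L
    rw [neg_neg, neg_neg, eq_sub_iff_add_eq]
    exact intervalIntegral.integral_add_adjacent_intervals
      (qsq_intable hqm hc₁ hbd L a b) (qsq_intable hqm hc₁ hbd L b 0)
  have h5 := (psi_tendsto hcesaro ha').sub (psi_tendsto hcesaro hb')
  have h6 : Tendsto (fun L : ℝ => ∫ x in a..b, q (-L * x) ^ 2) atTop
      (nhds (A * -a - A * -b)) := h5.congr fun L => (key L).symm
  convert h6 using 2
  ring

/-- Main ingredient: the rescaled-limit statement along `atTop` in `L`. -/
lemma main_atTop {q : ℝ → ℝ} {c₁ c₂ A : ℝ} (hqm : Measurable q) (hc₁ : 0 < c₁)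
    (hc : c₁ ≤ c₂) (hbd : ∀ s, c₁ ≤ q s ∧ q s ≤ c₂)
    (hcesaro : Tendsto (fun T : ℝ => (1 / T) * ∫ s in (0 : ℝ)..T, q s ^ 2)
      atTop (nhds A)) {h : ℝ} (hh : 0 < h)
    (g : ℝ → ℝ) (hg : ContinuousOn g (Icc (-h) 0)) :
    Tendsto (fun L : ℝ => ∫ x in (-h)..(0 : ℝ), g x * q (-L * x) ^ 2) atTop
      (nhds (A * ∫ x in (-h)..(0 : ℝ), g x)) := by
  have hc₂ : 0 < c₂ := lt_of_lt_of_le hc₁ hc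
  rw [Metric.tendsto_nhds]
  intro ε hε
  set M : ℝ := c₂ ^ 2 + |A| + 1 with hM
  have hM0 : 0 < M := by positivity
  set d : ℝ := ε / (3 * M * h) with hd
  have hd0 : 0 < d := by positivity
  obtain ⟨δ, hδ0, hδ⟩ := Metric.uniformContinuousOn_iff.mp
    (isCompact_Icc.uniformContinuousOn_of_continuous hg) d hd0
  obtain ⟨n, hn⟩ := exists_nat_gt (h / δ)
  have hn0 : (0 : ℝ) < n := lt_trans (div_pos hh hδ0) hn
  set Δ : ℝ := h / n with hΔ
  have hΔ0 : 0 < Δ := div_pos hh hn0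
  have hnΔ : (n : ℝ) * Δ = h := by
    rw [hΔ]; field_simp
  have hΔδ : Δ < δ := by
    rw [hΔ, div_lt_iff₀ hn0]
    have := (div_lt_iff₀ hδ0).1 hn
    nlinarith
  set t : ℕ → ℝ := fun i => -h + i * Δ with ht
  have ht0 : t 0 = -h := by simp [ht]
  have htn : t n = 0 := by simp [ht, hnΔ]
  have htd : ∀ i : ℕ, t (i + 1) - t i = Δ := by
    intro i; simp only [ht]; push_cast; ring
  have htle : ∀ i : ℕ, t i ≤ t (i + 1) := by
    intro i; have := htd i; linarith
  have hmem : ∀ i : ℕ, i ≤ n → t i ∈ Icc (-h) 0 := by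
    intro i hi
    have hi' : (i : ℝ) ≤ n := Nat.cast_le.2 hi
    constructor
    · simp only [ht, le_add_iff_nonneg_right]
      positivity
    · simp only [ht]
      nlinarith
  -- integrabilities
  have hq2 : ∀ L a b : ℝ, IntervalIntegrable (fun x => q (-L * x) ^ 2)
      MeasureTheory.volume a b := qsq_intable hqm hc₁ hbd
  have hsub : ∀ i : ℕ, i < n → uIcc (t i) (t (i + 1)) ⊆ Icc (-h) 0 := by
    intro i hi
    rw [uIcc_of_le (htle i)]
    exact Icc_subset_Icc (hmem i hi.le).1 (hmem (i + 1) hi).2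
  have hgint : ∀ i : ℕ, i < n →
      IntervalIntegrable g MeasureTheory.volume (t i) (t (i + 1)) := by
    intro i hi
    exact (hg.mono (hsub i hi)).intervalIntegrable
  have hgq : ∀ L : ℝ, ∀ i : ℕ, i < n → IntervalIntegrable
      (fun x => g x * q (-L * x) ^ 2) MeasureTheory.volume (t i) (t (i + 1)) := by
    intro L i hi
    exact (hq2 L _ _).continuousOn_mul (hg.mono (hsub i hi))
  -- decompositions
  have hsplit : ∀ L : ℝ, (∫ x in (-h)..(0 : ℝ), g x * q (-L * x) ^ 2)
      = ∑ i ∈ Finset.range n, ∫ x in t i..t (i + 1), g x * q (-L * x) ^ 2 := by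
    intro L
    rw [← ht0, ← htn]
    exact (intervalIntegral.sum_integral_adjacent_intervals (hgq L)).symm
  have hgsplit : (∫ x in (-h)..(0 : ℝ), g x)
      = ∑ i ∈ Finset.range n, ∫ x in t i..t (i + 1), g x := by
    rw [← ht0, ← htn]
    exact (intervalIntegral.sum_integral_adjacent_intervals hgint).symm
  set S : ℝ → ℝ := fun L => ∑ i ∈ Finset.range n,
    g (t i) * ∫ x in t i..t (i + 1), q (-L * x) ^ 2 with hS
  set SL : ℝ := ∑ i ∈ Finset.range n, g (t i) * (A * Δ) with hSL
  have hStend : Tendsto S atTop (nhds SL) := by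
    apply tendsto_finset_sum
    intro i hi
    have h1 := (interval_tendsto hqm hc₁ hbd hcesaro (htle i)
      (hmem (i + 1) (Finset.mem_range.1 hi)).2).const_mul (g (t i))
    rw [htd i] at h1
    exact h1
  -- oscillation bound
  have hosc : ∀ i : ℕ, i < n → ∀ x ∈ uIoc (t i) (t (i + 1)), |g x - g (t i)| ≤ d := by
    intro i hi x hx
    rw [uIoc_of_le (htle i)] at hx
    have hx1 : x ∈ Icc (-h) 0 :=
      ⟨le_trans (hmem i hi.le).1 hx.1.le, le_trans hx.2 (hmem (i + 1) hi).2⟩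
    have hdist : dist x (t i) < δ := by
      rw [Real.dist_eq, abs_of_nonneg (by linarith [hx.1.le] : (0:ℝ) ≤ x - t i)]
      have := htd i
      linarith [hx.2]
    have := hδ x hx1 (t i) (hmem i hi.le) hdist
    rw [Real.dist_eq] at this
    exact this.le
  have hqb : ∀ s : ℝ, |q s ^ 2| ≤ c₂ ^ 2 := by
    intro s
    have h1 := (hbd s).1
    have h2 := (hbd s).2
    rw [abs_of_nonneg (sq_nonneg _)]
    nlinarith
  -- |J L - S L| ≤ d * c₂^2 * h
  have hJS : ∀ L : ℝ, |(∫ x in (-h)..(0 : ℝ), g x * q (-L * x) ^ 2) - S L|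
      ≤ d * c₂ ^ 2 * h := by
    intro L
    rw [hsplit L, hS]
    rw [← Finset.sum_sub_distrib]
    calc |∑ i ∈ Finset.range n, ((∫ x in t i..t (i + 1), g x * q (-L * x) ^ 2)
          - g (t i) * ∫ x in t i..t (i + 1), q (-L * x) ^ 2)|
        ≤ ∑ i ∈ Finset.range n, |(∫ x in t i..t (i + 1), g x * q (-L * x) ^ 2)
          - g (t i) * ∫ x in t i..t (i + 1), q (-L * x) ^ 2| :=
          Finset.abs_sum_le_sum_abs _ _
      _ ≤ ∑ i ∈ Finset.range n, d * c₂ ^ 2 * Δ := by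
          apply Finset.sum_le_sum
          intro i hi
          have hi' := Finset.mem_range.1 hi
          have heq : (∫ x in t i..t (i + 1), g x * q (-L * x) ^ 2)
              - g (t i) * ∫ x in t i..t (i + 1), q (-L * x) ^ 2
              = ∫ x in t i..t (i + 1), (g x - g (t i)) * q (-L * x) ^ 2 := by
            rw [← intervalIntegral.integral_const_mul,
              ← intervalIntegral.integral_sub (hgq L i hi') ((hq2 L _ _).const_mul _)]
            congr 1; funext x; ring
          rw [heq]
          have hb : ∀ x ∈ uIoc (t i) (t (i + 1)),
              ‖(g x - g (t i)) * q (-L * x) ^ 2‖ ≤ d * c₂ ^ 2 := by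
            intro x hx
            rw [Real.norm_eq_abs, abs_mul]
            exact mul_le_mul (hosc i hi' x hx) (hqb _) (abs_nonneg _) hd0.le
          have := intervalIntegral.norm_integral_le_of_norm_le_const hb
          rw [Real.norm_eq_abs] at this
          calc |∫ x in t i..t (i + 1), (g x - g (t i)) * q (-L * x) ^ 2|
              ≤ d * c₂ ^ 2 * |t (i + 1) - t i| := this
            _ = d * c₂ ^ 2 * Δ := by rw [htd i, abs_of_pos hΔ0]
      _ = d * c₂ ^ 2 * h := by
          rw [Finset.sum_const, Finset.card_range, nsmul_eq_mul]
          calc (n : ℝ) * (d * c₂ ^ 2 * Δ) = d * c₂ ^ 2 * ((n : ℝ) * Δ) := by ring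
            _ = d * c₂ ^ 2 * h := by rw [hnΔ]
  -- |SL - A * ∫ g| ≤ |A| * d * h
  have hSLb : |SL - A * ∫ x in (-h)..(0 : ℝ), g x| ≤ |A| * d * h := by
    rw [hSL, hgsplit, Finset.mul_sum, ← Finset.sum_sub_distrib]
    calc |∑ i ∈ Finset.range n, (g (t i) * (A * Δ)
          - A * ∫ x in t i..t (i + 1), g x)|
        ≤ ∑ i ∈ Finset.range n, |g (t i) * (A * Δ)
          - A * ∫ x in t i..t (i + 1), g x| := Finset.abs_sum_le_sum_abs _ _
      _ ≤ ∑ i ∈ Finset.range n, |A| * d * Δ := by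
          apply Finset.sum_le_sum
          intro i hi
          have hi' := Finset.mem_range.1 hi
          have heq : g (t i) * (A * Δ) - A * ∫ x in t i..t (i + 1), g x
              = A * ∫ x in t i..t (i + 1), (g (t i) - g x) := by
            rw [intervalIntegral.integral_sub intervalIntegrable_const (hgint i hi'),
              intervalIntegral.integral_const, htd i, smul_eq_mul]
            ring
          rw [heq, abs_mul]
          have hb : ∀ x ∈ uIoc (t i) (t (i + 1)), ‖g (t i) - g x‖ ≤ d := by
            intro x hx
            rw [Real.norm_eq_abs, abs_sub_comm]
            exact hosc i hi' x hx
          have h2 := intervalIntegral.norm_integral_le_of_norm_le_const hb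
          rw [Real.norm_eq_abs, htd i, abs_of_pos hΔ0] at h2
          calc |A| * |∫ x in t i..t (i + 1), (g (t i) - g x)|
              ≤ |A| * (d * Δ) := mul_le_mul_of_nonneg_left h2 (abs_nonneg _)
            _ = |A| * d * Δ := by ring
      _ = |A| * d * h := by
          rw [Finset.sum_const, Finset.card_range, nsmul_eq_mul]
          calc (n : ℝ) * (|A| * d * Δ) = |A| * d * ((n : ℝ) * Δ) := by ring
            _ = |A| * d * h := by rw [hnΔ]
  -- size of d-terms
  have hdMh : d * M * h = ε / 3 := by
    rw [hd]; field_simp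
  have hb1 : d * c₂ ^ 2 * h ≤ ε / 3 := by nlinarith [abs_nonneg A]
  have hb2 : |A| * d * h ≤ ε / 3 := by nlinarith [sq_nonneg c₂, abs_nonneg A]
  -- conclude
  have hev := (Metric.tendsto_nhds.1 hStend) (ε / 3) (by positivity)
  filter_upwards [hev] with L hL
  rw [Real.dist_eq]
  have h1 := hJS L
  have h2 := hSLb
  rw [Real.dist_eq] at hL
  have tri : |(∫ x in (-h)..(0 : ℝ), g x * q (-L * x) ^ 2)
      - A * ∫ x in (-h)..(0 : ℝ), g x|
      ≤ |(∫ x in (-h)..(0 : ℝ), g x * q (-L * x) ^ 2) - S L|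
        + |S L - SL| + |SL - A * ∫ x in (-h)..(0 : ℝ), g x| := by
    have := abs_sub_le (∫ x in (-h)..(0 : ℝ), g x * q (-L * x) ^ 2) (S L)
      (A * ∫ x in (-h)..(0 : ℝ), g x)
    have := abs_sub_le (S L) SL (A * ∫ x in (-h)..(0 : ℝ), g x)
    linarith [abs_sub_le (∫ x in (-h)..(0 : ℝ), g x * q (-L * x) ^ 2) (S L)
      (A * ∫ x in (-h)..(0 : ℝ), g x),
      abs_sub_le (S L) SL (A * ∫ x in (-h)..(0 : ℝ), g x)]
  linarith

/-- ergodic averaging of the vertical integral: if the Cesàro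
averages of `q²` converge to `⟨q²⟩`, then
`∫_{−h}^0 g(x₃) q²(−ε^{−θ}x₃) dx₃ → ⟨q²⟩ ∫_{−h}^0 g`. -/
theorem ergodic_vertical_averaging (q : ℝ → ℝ) (c₁ c₂ A θ h : ℝ)
    (hqm : Measurable q) (hc₁ : 0 < c₁) (hc : c₁ ≤ c₂)
    (hbd : ∀ s, c₁ ≤ q s ∧ q s ≤ c₂)
    (hcesaro : Tendsto (fun T : ℝ => (1 / T) * ∫ s in (0 : ℝ)..T, q s ^ 2)
      atTop (nhds A))
    (hθ : 0 < θ) (hh : 0 < h)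
    (g : ℝ → ℝ) (hg : ContinuousOn g (Icc (-h) 0)) :
    Tendsto (fun ε : ℝ => ∫ x in (-h)..(0 : ℝ), g x * q (-(ε ^ (-θ)) * x) ^ 2)
      (nhdsWithin 0 (Ioi 0))
      (nhds (A * ∫ x in (-h)..(0 : ℝ), g x)) := by
  have hcomp : Tendsto (fun ε : ℝ => ε ^ (-θ)) (nhdsWithin (0:ℝ) (Ioi 0)) atTop := by
    have h1 : Tendsto (fun ε : ℝ => (ε⁻¹) ^ θ) (nhdsWithin (0:ℝ) (Ioi 0)) atTop :=
      (tendsto_rpow_atTop hθ).comp tendsto_inv_nhdsGT_zero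
    refine h1.congr' ?_
    filter_upwards [self_mem_nhdsWithin] with x hx
    rw [Real.inv_rpow (le_of_lt hx), ← Real.rpow_neg (le_of_lt hx)]
  exact (main_atTop hqm hc₁ hc hbd hcesaro hh g hg).comp hcomp
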